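/- Let f be a Jacobian pair and Ω a cofinite subset of ℂ² with f(Ω) ⊆ Ω. If the restriction f|_Ω is injective, then f itself is injective and f is an automorphism of ℂ² (bijective with polynomial inverse). -/

import Mathlib

open MvPolynomial Metric Set Topology Filter

noncomputable section

namespace JPaux

variable {m : ℕ}

lemma contDiff_eval (p : MvPolynomial (Fin m) ℂ) :
    ContDiff ℂ ⊤ (fun x : Fin m → ℂ => eval x p) := by
  induction p using MvPolynomial.induction_on with
  | C a => simpa using contDiff_const (c := a)
  | add p q hp hq =>
      have : (fun x : Fin m → ℂ => eval x (p + q)) =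
          fun x => eval x p + eval x q := by funext x; simp
      rw [this]; exact hp.add hq
  | mul_X p n hp =>
      have : (fun x : Fin m → ℂ => eval x (p * X n)) =
          fun x => eval x p * x n := by funext x; simp
      rw [this]; exact hp.mul (contDiff_pi.mp contDiff_id n)

lemma continuous_eval (p : MvPolynomial (Fin m) ℂ) :
    Continuous (fun x : Fin m → ℂ => eval x p) := (contDiff_eval p).continuous

lemma growth_eval (p : MvPolynomial (Fin m) ℂ) :
    ∃ (C : ℝ) (N : ℕ), 0 ≤ C ∧ ∀ y : Fin m → ℂ, ‖eval y p‖ ≤ C * (1 + ‖y‖) ^ N := by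
  induction p using MvPolynomial.induction_on with
  | C a => exact ⟨‖a‖, 0, norm_nonneg a, fun y => by simp⟩
  | add p q hp hq =>
      obtain ⟨C₁, N₁, hC₁, h₁⟩ := hp
      obtain ⟨C₂, N₂, hC₂, h₂⟩ := hq
      refine ⟨C₁ + C₂, max N₁ N₂, by linarith, fun y => ?_⟩
      have hb : (1 : ℝ) ≤ 1 + ‖y‖ := by linarith [norm_nonneg y]
      have e₁ : (1 + ‖y‖) ^ N₁ ≤ (1 + ‖y‖) ^ (max N₁ N₂) :=
        pow_le_pow_right₀ hb (le_max_left _ _)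
      have e₂ : (1 + ‖y‖) ^ N₂ ≤ (1 + ‖y‖) ^ (max N₁ N₂) :=
        pow_le_pow_right₀ hb (le_max_right _ _)
      calc ‖eval y (p + q)‖ ≤ ‖eval y p‖ + ‖eval y q‖ := by
            simp only [map_add]; exact norm_add_le _ _
        _ ≤ C₁ * (1 + ‖y‖) ^ (max N₁ N₂) + C₂ * (1 + ‖y‖) ^ (max N₁ N₂) := by
            gcongr <;> [exact (h₁ y).trans (by nlinarith); exact (h₂ y).trans (by nlinarith)]
        _ = (C₁ + C₂) * (1 + ‖y‖) ^ (max N₁ N₂) := by ring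
  | mul_X p n hp =>
      obtain ⟨C, N, hC, h⟩ := hp
      refine ⟨C, N + 1, hC, fun y => ?_⟩
      have hyn : ‖y n‖ ≤ 1 + ‖y‖ := le_trans (norm_le_pi_norm y n) (by linarith [norm_nonneg y])
      calc ‖eval y (p * X n)‖ = ‖eval y p‖ * ‖y n‖ := by simp [norm_mul]
        _ ≤ (C * (1 + ‖y‖) ^ N) * (1 + ‖y‖) := by
            apply mul_le_mul (h y) hyn (norm_nonneg _) (by positivity)
        _ = C * (1 + ‖y‖) ^ (N + 1) := by ring

lemma hasFDerivAt_eval (p : MvPolynomial (Fin m) ℂ) (x : Fin m → ℂ) :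
    HasFDerivAt (fun x : Fin m → ℂ => eval x p)
      (∑ j, eval x (pderiv j p) • (ContinuousLinearMap.proj j : (Fin m → ℂ) →L[ℂ] ℂ)) x := by
  induction p using MvPolynomial.induction_on with
  | C a =>
      have e0 : (fun x : Fin m → ℂ => eval x (C a : MvPolynomial (Fin m) ℂ)) =
          fun _ => a := by funext x; simp
      have : (∑ j, eval x (pderiv j (C a : MvPolynomial (Fin m) ℂ)) •
          (ContinuousLinearMap.proj j : (Fin m → ℂ) →L[ℂ] ℂ)) = 0 := by
        refine Finset.sum_eq_zero (fun j _ => ?_)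
        rw [pderiv_C, map_zero]
        exact zero_smul ℂ (ContinuousLinearMap.proj j : (Fin m → ℂ) →L[ℂ] ℂ)
      rw [this, e0]
      exact hasFDerivAt_const _ x
  | add p q hp hq =>
      have h := hp.add hq
      have e1 : (fun x : Fin m → ℂ => eval x (p + q)) =
          fun x => eval x p + eval x q := by funext x; simp
      have e2 : (∑ j, eval x (pderiv j (p + q)) •
            (ContinuousLinearMap.proj j : (Fin m → ℂ) →L[ℂ] ℂ)) =
          (∑ j, eval x (pderiv j p) • (ContinuousLinearMap.proj j : (Fin m → ℂ) →L[ℂ] ℂ)) +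
          (∑ j, eval x (pderiv j q) • (ContinuousLinearMap.proj j : (Fin m → ℂ) →L[ℂ] ℂ)) := by
        ext v
        simp only [ContinuousLinearMap.sum_apply, ContinuousLinearMap.add_apply,
          ContinuousLinearMap.smul_apply, ContinuousLinearMap.proj_apply, smul_eq_mul, map_add]
        rw [← Finset.sum_add_distrib]
        exact Finset.sum_congr rfl fun j _ => by ring
      rw [e1, e2]; exact h
  | mul_X p n hp =>
      have hn : HasFDerivAt (fun x : Fin m → ℂ => x n)
          (ContinuousLinearMap.proj n : (Fin m → ℂ) →L[ℂ] ℂ) x :=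
        hasFDerivAt_apply n x
      have h := hp.mul hn
      have e1 : (fun x : Fin m → ℂ => eval x (p * X n)) =
          fun x => eval x p * x n := by funext x; simp
      have e2 : (∑ j, eval x (pderiv j (p * X n)) •
            (ContinuousLinearMap.proj j : (Fin m → ℂ) →L[ℂ] ℂ)) =
          x n • (∑ j, eval x (pderiv j p) •
            (ContinuousLinearMap.proj j : (Fin m → ℂ) →L[ℂ] ℂ)) +
            eval x p • (ContinuousLinearMap.proj n : (Fin m → ℂ) →L[ℂ] ℂ) := by
        ext v
        simp only [ContinuousLinearMap.sum_apply, ContinuousLinearMap.add_apply,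
          ContinuousLinearMap.smul_apply, ContinuousLinearMap.proj_apply, smul_eq_mul,
          Finset.mul_sum]
        have hterm : ∀ j : Fin m, eval x (pderiv j (p * X n)) * v j
            = x n * (eval x (pderiv j p) * v j)
              + (if j = n then eval x p * v n else 0) := by
          intro j
          have hX : (pderiv j) (X n : MvPolynomial (Fin m) ℂ) =
              if j = n then 1 else 0 := by
            rw [pderiv_X]; by_cases hj : j = n <;> simp [hj, Pi.single_apply]
          rw [pderiv_mul, hX]
          by_cases hj : j = n
          · subst hj; simp; ring
          · simp [hj]; ring
        rw [Finset.sum_congr rfl (fun j _ => hterm j), Finset.sum_add_distrib,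
          Finset.sum_ite_eq' Finset.univ n (fun _ => eval x p * v n)]
        simp
      rw [e1, e2]
      rw [add_comm]
      exact h
  
lemma differentiable_eval (p : MvPolynomial (Fin m) ℂ) :
    Differentiable ℂ (fun x : Fin m → ℂ => eval x p) :=
  fun x => (hasFDerivAt_eval p x).differentiableAt


/-- One-variable: entire function with polynomial growth is a polynomial of degree ≤ N. -/
lemma poly_of_growth_one (N : ℕ) :
    ∀ (f : ℂ → ℂ), Differentiable ℂ f → ∀ (C : ℝ), (∀ z, ‖f z‖ ≤ C * (1 + ‖z‖) ^ N) →
    ∃ p : Polynomial ℂ, p.natDegree ≤ N ∧ ∀ z, f z = p.eval z := by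
  induction N with
  | zero =>
      intro f hf C h
      have hb : Bornology.IsBounded (range f) := by
        apply (Metric.isBounded_iff_subset_closedBall 0).2
        refine ⟨C, ?_⟩
        rintro _ ⟨z, rfl⟩
        simpa [Metric.mem_closedBall, dist_eq_norm] using by simpa using h z
      obtain ⟨c, hc⟩ := hf.exists_const_forall_eq_of_bounded hb
      exact ⟨Polynomial.C c, by simp, fun z => by simp [hc z]⟩
  | succ N ih =>
      intro f hf C h
      have hC : 0 ≤ C := by
        have h0 := h 0
        simp only [norm_zero, add_zero, one_pow, mul_one] at h0
        exact le_trans (norm_nonneg _) h0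
      set g : ℂ → ℂ := dslope f 0 with hg
      have hgd : Differentiable ℂ g := by
        rw [← differentiableOn_univ]
        exact (Complex.differentiableOn_dslope Filter.univ_mem).2 hf.differentiableOn
      obtain ⟨M, hM⟩ := (isCompact_closedBall (0:ℂ) 1).exists_bound_of_continuousOn
        hgd.continuous.continuousOn
      have hM0 : 0 ≤ M := le_trans (norm_nonneg _) (hM 0 (by simp))
      have hgrow : ∀ z, ‖g z‖ ≤ (M + 4 * C) * (1 + ‖z‖) ^ N := by
        intro z
        have hb1 : (1:ℝ) ≤ (1 + ‖z‖) ^ N := one_le_pow₀ (by linarith [norm_nonneg z])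
        by_cases hz : ‖z‖ ≤ 1
        · have : ‖g z‖ ≤ M := hM z (by simpa [Metric.mem_closedBall, dist_eq_norm] using hz)
          nlinarith
        · push_neg at hz
          have hz0 : z ≠ 0 := by intro hh; rw [hh] at hz; simp at hz; linarith
          have : g z = (f z - f 0) / z := by
            rw [hg, dslope_of_ne f hz0, slope_def_field]; simp
          rw [this, norm_div]
          rw [div_le_iff₀ (by linarith : (0:ℝ) < ‖z‖)]
          have h1 : ‖f z - f 0‖ ≤ C * (1 + ‖z‖) ^ (N + 1) + C := by
            refine (norm_sub_le _ _).trans ?_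
            have := h z; have h0 := h 0
            simp only [norm_zero] at h0
            have : ‖f 0‖ ≤ C := by simpa using h0
            linarith [h z]
          have h2 : C * (1 + ‖z‖) ^ (N + 1) + C ≤ 2 * C * (1 + ‖z‖) ^ (N + 1) := by
            have : (1:ℝ) ≤ (1 + ‖z‖) ^ (N+1) := one_le_pow₀ (by linarith [norm_nonneg z])
            nlinarith
          have h4 : (1 + ‖z‖) ≤ 2 * ‖z‖ := by linarith
          have h5 : (0:ℝ) ≤ (1 + ‖z‖) ^ N := by positivity
          have h3 : (2 : ℝ) * C * (1 + ‖z‖) ^ (N + 1) ≤ 4 * C * ((1 + ‖z‖) ^ N * ‖z‖) := by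
            have e : (1 + ‖z‖) ^ (N + 1) = (1 + ‖z‖) ^ N * (1 + ‖z‖) := by ring
            rw [e]
            have := mul_le_mul_of_nonneg_left h4
              (mul_nonneg (mul_nonneg (by norm_num : (0:ℝ) ≤ 2) hC) h5)
            calc 2 * C * ((1 + ‖z‖) ^ N * (1 + ‖z‖)) = 2 * C * (1 + ‖z‖) ^ N * (1 + ‖z‖) := by ring
              _ ≤ 2 * C * (1 + ‖z‖) ^ N * (2 * ‖z‖) := this
              _ = 4 * C * ((1 + ‖z‖) ^ N * ‖z‖) := by ring
          have h6 : (4:ℝ) * C * ((1 + ‖z‖) ^ N * ‖z‖) ≤ (M + 4 * C) * (1 + ‖z‖) ^ N * ‖z‖ := by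
            have hnz : (0:ℝ) ≤ ‖z‖ := norm_nonneg z
            nlinarith [mul_nonneg (mul_nonneg hM0 h5) hnz]
          calc ‖f z - f 0‖ ≤ 2 * C * (1 + ‖z‖) ^ (N + 1) := le_trans h1 h2
            _ ≤ 4 * C * ((1 + ‖z‖) ^ N * ‖z‖) := h3
            _ ≤ (M + 4 * C) * (1 + ‖z‖) ^ N * ‖z‖ := h6
      obtain ⟨p', hp'deg, hp'⟩ := ih g hgd (M + 4 * C) hgrow
      refine ⟨Polynomial.C (f 0) + Polynomial.X * p', ?_, fun z => ?_⟩
      · refine (Polynomial.natDegree_add_le _ _).trans ?_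
        simp only [Polynomial.natDegree_C, max_le_iff]
        constructor
        · exact Nat.zero_le _
        · exact (Polynomial.natDegree_mul_le).trans
            (by simp only [Polynomial.natDegree_X]; omega)
      · have hz : z * g z = f z - f 0 := by
          have := sub_smul_dslope f 0 z
          simpa [smul_eq_mul] using this
        have : f z = f 0 + z * g z := by rw [hz]; ring
        rw [this, hp' z]
        simp only [Polynomial.eval_add, Polynomial.eval_C, Polynomial.eval_mul,
          Polynomial.eval_X]


lemma eval_aeval {k : ℕ} (g : Fin k → MvPolynomial (Fin m) ℂ) (x : Fin m → ℂ)
    (A : MvPolynomial (Fin k) ℂ) :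
    eval x (MvPolynomial.aeval g A) = eval (fun j => eval x (g j)) A := by
  induction A using MvPolynomial.induction_on with
  | C a => simp
  | add p q hp hq => simp only [map_add, hp, hq]
  | mul_X p n hp => simp only [map_mul, aeval_X, eval_X, hp]

lemma eval_polyaeval (B : Polynomial ℂ) (j : Fin m) (y : Fin m → ℂ) :
    eval y (Polynomial.aeval (X j : MvPolynomial (Fin m) ℂ) B) = Polynomial.eval (y j) B := by
  induction B using Polynomial.induction_on' with
  | add p q hp hq => simp [hp, hq]
  | monomial n a => simp [Polynomial.aeval_monomial, MvPolynomial.algebraMap_eq]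

lemma eval_line (Q : MvPolynomial (Fin m) ℂ) (x v : Fin m → ℂ) (t : ℂ) :
    Polynomial.eval t (MvPolynomial.aeval
        (fun j => Polynomial.C (x j) + Polynomial.C (v j) * Polynomial.X) Q)
      = eval (fun j => x j + v j * t) Q := by
  induction Q using MvPolynomial.induction_on with
  | C a => simp
  | add p q hp hq => simp [hp, hq]
  | mul_X p n hp => simp [hp]

lemma dense_nonzero {Q : MvPolynomial (Fin m) ℂ} (hQ : Q ≠ 0) :
    Dense {y : Fin m → ℂ | eval y Q ≠ 0} := by
  rw [Metric.dense_iff]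
  intro x r hr
  have hex : ∃ y₁, eval y₁ Q ≠ 0 := by
    by_contra hall; push_neg at hall
    exact hQ (MvPolynomial.funext fun y => by simpa using hall y)
  obtain ⟨y₁, hy₁⟩ := hex
  by_cases hx : eval x Q ≠ 0
  · exact ⟨x, mem_ball_self hr, hx⟩
  push_neg at hx
  set w : Fin m → ℂ := fun j => y₁ j - x j with hw
  set φ : Polynomial ℂ := MvPolynomial.aeval
      (fun j => Polynomial.C (x j) + Polynomial.C (w j) * Polynomial.X) Q with hφdef
  have hφ1 : φ.eval 1 = eval y₁ Q := by
    rw [hφdef, eval_line]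
    have he : (fun j => x j + w j * 1) = y₁ := by funext j; simp [hw]
    rw [he]
  have hφ : φ ≠ 0 := fun h => hy₁ (by rw [← hφ1, h, Polynomial.eval_zero])
  have hroots := Polynomial.finite_setOf_isRoot hφ
  have hwpos : (0:ℝ) < ‖w‖ + 1 := by positivity
  set δ := r / (‖w‖ + 1) with hδdef
  have hδ : 0 < δ := div_pos hr hwpos
  have hball : (Metric.ball (0:ℂ) δ).Infinite :=
    infinite_of_mem_nhds (0:ℂ) (Metric.ball_mem_nhds 0 hδ)
  obtain ⟨t, ht⟩ := (hball.diff hroots).nonempty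
  obtain ⟨htb, htr⟩ := ht
  refine ⟨fun j => x j + w j * t, ?_, ?_⟩
  · rw [Metric.mem_ball, dist_eq_norm]
    have he : (fun j => x j + w j * t) - x = t • w := by
      funext j; simp [Pi.smul_apply, smul_eq_mul]; ring
    rw [he, norm_smul]
    have htn : ‖t‖ < δ := by simpa [Metric.mem_ball, dist_eq_norm] using htb
    calc ‖t‖ * ‖w‖ ≤ ‖t‖ * (‖w‖ + 1) := by nlinarith [norm_nonneg t]
      _ < δ * (‖w‖ + 1) := by nlinarith
      _ = r := by rw [hδdef]; field_simp
  · show eval (fun j => x j + w j * t) Q ≠ 0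
    rw [← eval_line Q x w t]
    exact fun h => htr h

lemma root_bound {d : ℕ} (hd : 1 ≤ d) (t : ℂ) (c : ℕ → ℂ)
    (h : t ^ d = ∑ k ∈ Finset.range d, c k * t ^ k) :
    ‖t‖ ≤ 1 + ∑ k ∈ Finset.range d, ‖c k‖ := by
  obtain ⟨e, rfl⟩ : ∃ e, d = e + 1 := ⟨d - 1, by omega⟩
  by_cases ht : ‖t‖ ≤ 1
  · have : (0:ℝ) ≤ ∑ k ∈ Finset.range (e+1), ‖c k‖ :=
      Finset.sum_nonneg (fun k _ => norm_nonneg (c k))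
    linarith
  push_neg at ht
  have h1 : ‖t‖ ^ (e+1) ≤ (∑ k ∈ Finset.range (e+1), ‖c k‖) * ‖t‖ ^ e := by
    calc ‖t‖ ^ (e+1) = ‖t ^ (e+1)‖ := (norm_pow t (e+1)).symm
      _ = ‖∑ k ∈ Finset.range (e+1), c k * t ^ k‖ := by rw [h]
      _ ≤ ∑ k ∈ Finset.range (e+1), ‖c k * t ^ k‖ := norm_sum_le _ _
      _ ≤ ∑ k ∈ Finset.range (e+1), ‖c k‖ * ‖t‖ ^ e := by
          apply Finset.sum_le_sum
          intro k hk
          rw [norm_mul, norm_pow]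
          exact mul_le_mul_of_nonneg_left
            (pow_le_pow_right₀ (le_of_lt ht) (by
              have := Finset.mem_range.mp hk; omega)) (norm_nonneg _)
      _ = _ := by rw [← Finset.sum_mul]
  rw [pow_succ'] at h1
  have h3 : (0:ℝ) < ‖t‖ ^ e := by positivity
  have h4 : ‖t‖ ≤ ∑ k ∈ Finset.range (e+1), ‖c k‖ := by
    exact le_of_mul_le_mul_right (by linarith [h1]) h3
  linarith


lemma poly_of_growth_two (f : (Fin 2 → ℂ) → ℂ) (hf : Differentiable ℂ f)
    (C : ℝ) (N : ℕ) (h : ∀ y, ‖f y‖ ≤ C * (1 + ‖y‖) ^ N) :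
    ∃ P : MvPolynomial (Fin 2) ℂ, ∀ y, f y = eval y P := by
  classical
  have hC : 0 ≤ C := by
    have h0 := h 0
    simp only [norm_zero, add_zero, one_pow, mul_one] at h0
    exact le_trans (norm_nonneg _) h0
  -- differentiability along lines
  have hl1 : ∀ a : ℂ, Differentiable ℂ (fun z : ℂ => (![z, a] : Fin 2 → ℂ)) := by
    intro a
    have : (fun z : ℂ => (![z, a] : Fin 2 → ℂ))
        = fun z => z • (![1, 0] : Fin 2 → ℂ) + ![0, a] := by
      funext z j
      fin_cases j <;> simp
    rw [this]
    exact (differentiable_id.smul_const _).add_const _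
  have hl2 : ∀ a : ℂ, Differentiable ℂ (fun w : ℂ => (![a, w] : Fin 2 → ℂ)) := by
    intro a
    have : (fun w : ℂ => (![a, w] : Fin 2 → ℂ))
        = fun w => w • (![0, 1] : Fin 2 → ℂ) + ![a, 0] := by
      funext w j
      fin_cases j <;> simp
    rw [this]
    exact (differentiable_id.smul_const _).add_const _
  -- norm bound
  have hnorm : ∀ z w : ℂ, (1 + ‖(![z, w] : Fin 2 → ℂ)‖) ≤ (1 + ‖z‖) * (1 + ‖w‖) := by
    intro z w
    have h1 : ‖(![z, w] : Fin 2 → ℂ)‖ ≤ ‖z‖ + ‖w‖ := by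
      apply pi_norm_le_iff_of_nonneg (by positivity) |>.2
      intro i
      fin_cases i
      · simpa using by linarith [norm_nonneg w]
      · simpa using by linarith [norm_nonneg z]
    nlinarith [norm_nonneg z, norm_nonneg w, mul_nonneg (norm_nonneg z) (norm_nonneg w)]
  have hb : ∀ z w : ℂ, ‖f ![z, w]‖ ≤ (C * (1 + ‖w‖) ^ N) * (1 + ‖z‖) ^ N := by
    intro z w
    refine (h _).trans ?_
    have h1 : (1 + ‖(![z, w] : Fin 2 → ℂ)‖) ^ N ≤ ((1 + ‖z‖) * (1 + ‖w‖)) ^ N :=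
      pow_le_pow_left₀ (by positivity) (hnorm z w) N
    calc C * (1 + ‖(![z, w] : Fin 2 → ℂ)‖) ^ N ≤ C * ((1 + ‖z‖) * (1 + ‖w‖)) ^ N :=
          mul_le_mul_of_nonneg_left h1 hC
      _ = (C * (1 + ‖w‖) ^ N) * (1 + ‖z‖) ^ N := by rw [mul_pow]; ring
  -- rows: for fixed w the function of z is a polynomial of degree ≤ N
  have rows : ∀ w : ℂ, ∃ p : Polynomial ℂ, p.natDegree ≤ N ∧
      ∀ z, f ![z, w] = p.eval z := fun w =>
    poly_of_growth_one N (fun z => f ![z, w]) (hf.comp (hl1 w)) _ (fun z => hb z w)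
  -- columns
  have cols : ∀ a : ℂ, ∃ q : Polynomial ℂ, q.natDegree ≤ N ∧
      ∀ w, f ![a, w] = q.eval w := by
    intro a
    refine poly_of_growth_one N (fun w => f ![a, w]) (hf.comp (hl2 a))
      (C * (1 + ‖a‖) ^ N) (fun w => ?_)
    refine (h _).trans ?_
    have h1 : (1 + ‖(![a, w] : Fin 2 → ℂ)‖) ^ N ≤ ((1 + ‖a‖) * (1 + ‖w‖)) ^ N :=
      pow_le_pow_left₀ (by positivity) (hnorm a w) N
    calc C * (1 + ‖(![a, w] : Fin 2 → ℂ)‖) ^ N ≤ C * ((1 + ‖a‖) * (1 + ‖w‖)) ^ N :=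
          mul_le_mul_of_nonneg_left h1 hC
      _ = (C * (1 + ‖a‖) ^ N) * (1 + ‖w‖) ^ N := by rw [mul_pow]; ring
  choose Q hQd hQv using cols
  -- interpolation nodes
  set s : Finset ℂ := (Finset.range (N + 1)).image (Nat.cast : ℕ → ℂ) with hs
  have hs_card : s.card = N + 1 := by
    rw [hs, Finset.card_image_of_injective _ Nat.cast_injective, Finset.card_range]
  have hvs : Set.InjOn (id : ℂ → ℂ) ↑s := Function.injective_id.injOn
  -- interpolation identity
  have hint : ∀ z w : ℂ, f ![z, w]
      = ∑ c ∈ s, f ![c, w] * Polynomial.eval z (Lagrange.basis s id c) := by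
    intro z w
    obtain ⟨p, hpd, hpv⟩ := rows w
    have hdeg : p.degree < s.card := by
      rw [hs_card]
      exact lt_of_le_of_lt p.degree_le_natDegree (by exact_mod_cast Nat.lt_succ_of_le hpd)
    have hip := Lagrange.eq_interpolate (v := id) (s := s) (f := p) hvs hdeg
    calc f ![z, w] = p.eval z := hpv z
      _ = Polynomial.eval z (Lagrange.interpolate s id fun c => p.eval (id c)) := by
          rw [← hip]
      _ = ∑ c ∈ s, f ![c, w] * Polynomial.eval z (Lagrange.basis s id c) := by
          rw [Lagrange.interpolate_apply, Polynomial.eval_finset_sum]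
          refine Finset.sum_congr rfl fun c hc => ?_
          rw [Polynomial.eval_mul, Polynomial.eval_C, id_eq, ← hpv c]
  -- assemble the 2-variable polynomial
  refine ⟨∑ c ∈ s, (Polynomial.aeval (X 0 : MvPolynomial (Fin 2) ℂ)
      (Lagrange.basis s id c)) * (Polynomial.aeval (X 1 : MvPolynomial (Fin 2) ℂ) (Q c)),
    fun y => ?_⟩
  have hy : (![y 0, y 1] : Fin 2 → ℂ) = y := by
    funext j; fin_cases j <;> simp
  calc f y = f ![y 0, y 1] := by rw [hy]
    _ = ∑ c ∈ s, f ![c, y 1] * Polynomial.eval (y 0) (Lagrange.basis s id c) :=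
        hint (y 0) (y 1)
    _ = _ := by
        rw [map_sum]
        refine Finset.sum_congr rfl fun c hc => ?_
        rw [map_mul, eval_polyaeval, eval_polyaeval, ← hQv c (y 1)]
        exact mul_comm _ _


lemma finrank_restrictDegree (n M : ℕ) :
    Module.finrank ℂ (restrictDegree (Fin n) ℂ M) = (M + 1) ^ n := by
  classical
  set s : Set (Fin n →₀ ℕ) := {f | ∀ i, f i ≤ M} with hs
  let e : s ≃ (Fin n → Fin (M + 1)) :=
    { toFun := fun f i => ⟨f.1 i, Nat.lt_succ_of_le (f.2 i)⟩
      invFun := fun g => ⟨Finsupp.equivFunOnFinite.symm (fun i => (g i : ℕ)), fun i => by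
        simpa using Nat.lt_succ_iff.mp (g i).2⟩
      left_inv := fun f => by
        apply Subtype.ext
        apply Finsupp.ext
        intro i
        simp
      right_inv := fun g => by
        funext i
        apply Fin.ext
        simp }
  haveI : Fintype s := Fintype.ofEquiv _ e.symm
  have hbasis : Module.finrank ℂ (restrictDegree (Fin n) ℂ M) = Fintype.card s := by
    have : restrictDegree (Fin n) ℂ M = MvPolynomial.restrictSupport ℂ s := rfl
    rw [this]
    exact Module.finrank_eq_card_basis (MvPolynomial.basisRestrictSupport ℂ s)
  rw [hbasis, Fintype.card_congr e, Fintype.card_fun]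
  simp

lemma totalDegree_aeval_le (f : Fin 3 → MvPolynomial (Fin 2) ℂ) (D : ℕ)
    (hD : ∀ i, (f i).totalDegree ≤ D) (N : ℕ) (A : MvPolynomial (Fin 3) ℂ)
    (hA : ∀ s ∈ A.support, ∀ i, s i ≤ N) :
    (MvPolynomial.aeval f A).totalDegree ≤ 3 * N * D := by
  rw [MvPolynomial.aeval_def, MvPolynomial.eval₂_eq]
  refine (MvPolynomial.totalDegree_finset_sum _ _).trans ?_
  refine Finset.sup_le fun d hd => ?_
  refine (MvPolynomial.totalDegree_mul _ _).trans ?_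
  have h1 : ((algebraMap ℂ (MvPolynomial (Fin 2) ℂ)) (coeff d A)).totalDegree = 0 := by
    rw [MvPolynomial.algebraMap_eq]; exact totalDegree_C _
  rw [h1, zero_add]
  refine (MvPolynomial.totalDegree_finset_prod _ _).trans ?_
  calc ∑ i ∈ d.support, (f i ^ d i).totalDegree
      ≤ ∑ _i ∈ d.support, N * D := by
        refine Finset.sum_le_sum fun i hi => ?_
        exact (MvPolynomial.totalDegree_pow _ _).trans (Nat.mul_le_mul (hA d hd i) (hD i))
    _ ≤ 3 * (N * D) := by
        have hcard : d.support.card ≤ 3 := by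
          refine le_trans (Finset.card_le_univ _) ?_
          simp
        rw [Finset.sum_const, smul_eq_mul]
        exact Nat.mul_le_mul_right (N * D) hcard
    _ = 3 * N * D := by ring

lemma exists_annihilator (f : Fin 3 → MvPolynomial (Fin 2) ℂ) :
    ∃ A : MvPolynomial (Fin 3) ℂ, A ≠ 0 ∧ MvPolynomial.aeval f A = 0 := by
  classical
  by_contra hcon
  push_neg at hcon
  set D : ℕ := (Finset.univ.sup fun i => (f i).totalDegree) + 1 with hD
  set N : ℕ := (3 * D + 1) ^ 2 with hN
  set M : ℕ := 3 * N * D with hM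
  let φ := (MvPolynomial.aeval (R := ℂ) f).toLinearMap
  have hmaps : ∀ A ∈ restrictDegree (Fin 3) ℂ N, φ A ∈ restrictDegree (Fin 2) ℂ M := by
    intro A hA
    apply restrictTotalDegree_le_restrictDegree
    rw [mem_restrictTotalDegree]
    refine totalDegree_aeval_le f D (fun i => by
      rw [hD]; exact Nat.le_succ_of_le (Finset.le_sup (f := fun i => (f i).totalDegree) (Finset.mem_univ i))) N A ?_
    exact fun st hst i => ((mem_restrictDegree _ _ _).mp hA) st hst i
  let ψ := φ.restrict hmaps
  have hinj : Function.Injective ψ := by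
    intro a b hab
    have h1 : φ a.1 = φ b.1 := congrArg Subtype.val hab
    have h2 : MvPolynomial.aeval f (a.1 - b.1) = 0 := by
      simp only [map_sub]
      rw [show (MvPolynomial.aeval f) a.1 = φ a.1 from rfl,
        show (MvPolynomial.aeval f) b.1 = φ b.1 from rfl, h1, sub_self]
    have h3 : a.1 - b.1 = (0 : MvPolynomial (Fin 3) ℂ) := by
      by_contra hne
      exact hcon _ hne h2
    exact Subtype.ext (by linear_combination (norm := abel) h3)
  have hle := LinearMap.finrank_le_finrank_of_injective hinj
  rw [finrank_restrictDegree, finrank_restrictDegree] at hle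
  -- hle : (N+1)^3 ≤ (M+1)^2
  have hD1 : 1 ≤ D := Nat.le_add_left 1 _
  have hN1 : 1 ≤ N := Nat.one_le_iff_ne_zero.mpr (by positivity)
  have hM1 : M + 1 ≤ N * (3 * D + 1) := by
    rw [hM]
    calc 3 * N * D + 1 ≤ 3 * N * D + N := by omega
      _ = N * (3 * D + 1) := by ring
  have h2 : (M + 1) ^ 2 ≤ (N * (3 * D + 1)) ^ 2 := Nat.pow_le_pow_left hM1 2
  have h3 : (N * (3 * D + 1)) ^ 2 = N ^ 3 := by
    rw [mul_pow, ← hN]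
    ring
  have h4 : (N + 1) ^ 3 ≤ N ^ 3 := by
    rw [← h3]
    exact le_trans hle h2
  have h5 : N ^ 3 < (N + 1) ^ 3 := Nat.pow_lt_pow_left (Nat.lt_succ_self N) (by norm_num)
  omega


end JPaux

/-- A polynomial map `ℂ² → ℂ²`: every coordinate function is polynomial. -/
def IsPolyMap (F : (Fin 2 → ℂ) → (Fin 2 → ℂ)) : Prop :=
  ∃ q : Fin 2 → MvPolynomial (Fin 2) ℂ, ∀ x i, F x i = MvPolynomial.eval x (q i)

/-- A Jacobian pair: a polynomial map `ℂ² → ℂ²` whose Jacobian determinant is a nonzero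
constant. -/
def IsJacobianPair (F : (Fin 2 → ℂ) → (Fin 2 → ℂ)) : Prop :=
  ∃ q : Fin 2 → MvPolynomial (Fin 2) ℂ,
    (∀ x i, F x i = MvPolynomial.eval x (q i)) ∧
    ∃ c : ℂ, c ≠ 0 ∧ ∀ x : Fin 2 → ℂ,
      (Matrix.of fun i j => MvPolynomial.eval x (MvPolynomial.pderiv j (q i))).det = c

/-- If a Jacobian pair is injective on a cofinite invariant subset
`Ω ⊆ ℂ²`, then it is injective and an automorphism of `ℂ²`. -/
theorem jacobian_pair_automorphism_of_injOn_cofinite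
    (F : (Fin 2 → ℂ) → (Fin 2 → ℂ)) (hF : IsJacobianPair F)
    (Ω : Set (Fin 2 → ℂ)) (hΩcof : Ωᶜ.Finite) (hinv : F '' Ω ⊆ Ω)
    (hinj : Set.InjOn F Ω) :
    Function.Injective F ∧
    ∃ G : (Fin 2 → ℂ) → (Fin 2 → ℂ), IsPolyMap G ∧
      Function.LeftInverse G F ∧ Function.RightInverse G F := by
  classical
  obtain ⟨q, hq, c, hc, hdet⟩ := hF
  have hFeq : F = fun x i => eval x (q i) := funext fun x => funext fun i => hq x i
  subst hFeq
  set F : (Fin 2 → ℂ) → (Fin 2 → ℂ) := fun x i => eval x (q i) with hFdef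
  -- smoothness
  have hFcont : ContDiff ℂ ⊤ F := contDiff_pi.2 fun i => JPaux.contDiff_eval (q i)
  -- the Jacobian matrix as a continuous linear map
  set Mx : (Fin 2 → ℂ) → Matrix (Fin 2) (Fin 2) ℂ :=
    fun x => Matrix.of fun i j => eval x (pderiv j (q i)) with hMx
  set L : (Fin 2 → ℂ) → (Fin 2 → ℂ) →L[ℂ] (Fin 2 → ℂ) :=
    fun x => LinearMap.toContinuousLinearMap (Matrix.toLin' (Mx x)) with hLdef
  have hL : ∀ x, HasFDerivAt F (L x) x := by
    intro x
    apply hasFDerivAt_pi''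
    intro i
    have h1 := JPaux.hasFDerivAt_eval (q i) x
    have h2 : (ContinuousLinearMap.proj i).comp (L x)
        = ∑ j, eval x (pderiv j (q i)) • (ContinuousLinearMap.proj j :
            (Fin 2 → ℂ) →L[ℂ] ℂ) := by
      ext v
      simp [hLdef, hMx, Matrix.toLin'_apply, Matrix.mulVec, dotProduct,
        ContinuousLinearMap.sum_apply, smul_eq_mul]
      fin_cases i <;> simp
    rw [h2]
    exact h1
  have hdetL : ∀ x, (L x).det ≠ 0 := by
    intro x
    have h1 : (L x).det = (Mx x).det := by
      show LinearMap.det _ = _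
      rw [hLdef]
      simp only [LinearMap.coe_toContinuousLinearMap]
      exact LinearMap.det_toLin' (Mx x)
    rw [h1, hMx, hdet x]
    exact hc
  set E : ∀ _x : Fin 2 → ℂ, (Fin 2 → ℂ) ≃L[ℂ] (Fin 2 → ℂ) :=
    fun x => (L x).toContinuousLinearEquivOfDetNeZero (hdetL x) with hE
  have hstrict : ∀ x, HasStrictFDerivAt F ((E x : (Fin 2 → ℂ) →L[ℂ] (Fin 2 → ℂ))) x := by
    intro x
    have hcoe : ((E x) : (Fin 2 → ℂ) →L[ℂ] (Fin 2 → ℂ)) = L x :=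
      ContinuousLinearMap.coe_toContinuousLinearEquivOfDetNeZero _ _
    rw [hcoe]
    exact (hFcont.contDiffAt).hasStrictFDerivAt' (hL x) (by simp)
  -- injectivity
  have hinjF : Function.Injective F := by
    intro a b hab
    by_contra hne
    obtain ⟨U, V, hUopen, hVopen, haU, hbV, hUV⟩ := t2_separation hne
    set φa := (hstrict a).toOpenPartialHomeomorph F with hφa
    set φb := (hstrict b).toOpenPartialHomeomorph F with hφb
    set Ua := φa.source ∩ U with hUa
    set Vb := φb.source ∩ V with hVb
    have haUa : a ∈ Ua := ⟨(hstrict a).mem_toOpenPartialHomeomorph_source, haU⟩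
    have hbVb : b ∈ Vb := ⟨(hstrict b).mem_toOpenPartialHomeomorph_source, hbV⟩
    have himgA : IsOpen (F '' Ua) := by
      have h1 := φa.isOpen_image_of_subset_source (φa.open_source.inter hUopen)
        inter_subset_left
      rwa [(hstrict a).toOpenPartialHomeomorph_coe] at h1
    have himgB : IsOpen (F '' Vb) := by
      have h1 := φb.isOpen_image_of_subset_source (φb.open_source.inter hVopen)
        inter_subset_left
      rwa [(hstrict b).toOpenPartialHomeomorph_coe] at h1
    set W := (F '' Ua) ∩ (F '' Vb) with hW
    have hyW : F a ∈ W := ⟨⟨a, haUa, rfl⟩, ⟨b, hbVb, hab.symm⟩⟩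
    have hWnhds : W ∈ 𝓝 (F a) := (himgA.inter himgB).mem_nhds hyW
    haveI : NeBot (𝓝[≠] (F a)) := Module.punctured_nhds_neBot ℂ _ _
    have hWinf : W.Infinite := infinite_of_mem_nhds (F a) hWnhds
    have hbad : ((F '' (Ua \ Ω)) ∪ (F '' (Vb \ Ω))).Finite := by
      refine Finite.union ?_ ?_
      · exact (hΩcof.subset (fun x hx => hx.2)).image F
      · exact (hΩcof.subset (fun x hx => hx.2)).image F
    obtain ⟨y', hy'⟩ := (hWinf.diff hbad).nonempty
    obtain ⟨⟨⟨u, huUa, huy⟩, ⟨v, hvVb, hvy⟩⟩, hy'bad⟩ := hy'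
    have huΩ : u ∈ Ω := by
      by_contra hcon
      exact hy'bad (Or.inl ⟨u, ⟨huUa, hcon⟩, huy⟩)
    have hvΩ : v ∈ Ω := by
      by_contra hcon
      exact hy'bad (Or.inr ⟨v, ⟨hvVb, hcon⟩, hvy⟩)
    have huv : u = v := hinj huΩ hvΩ (by rw [huy, hvy])
    have : u ∈ U ∩ V := ⟨huUa.2, huv ▸ hvVb.2⟩
    exact (hUV.le_bot this).elim
  -- surjectivity via Ax–Grothendieck
  have hsurjF : Function.Surjective F := ax_grothendieck_univ q hinjF
  set e := Equiv.ofBijective F ⟨hinjF, hsurjF⟩ with he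
  set G : (Fin 2 → ℂ) → (Fin 2 → ℂ) := ⇑e.symm with hG
  have hGF : ∀ x, G (F x) = x := fun x => e.symm_apply_apply x
  have hFG : ∀ y, F (G y) = y := fun y => e.apply_symm_apply y
  -- differentiability of G
  have hGdiff : ∀ y, DifferentiableAt ℂ G y := by
    intro y
    obtain ⟨a, rfl⟩ := hsurjF y
    have hloc := (hstrict a).to_localInverse
    have hev : G =ᶠ[𝓝 (F a)] (hstrict a).localInverse F (E a) a := by
      filter_upwards [(hstrict a).eventually_right_inverse] with y' hy'
      have h1 := congrArg G hy'
      rw [hGF] at h1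
      exact h1.symm
    exact hloc.differentiableAt.congr_of_eventuallyEq hev
  have hGcont : Continuous G := continuous_iff_continuousAt.2 fun y => (hGdiff y).continuousAt
  -- each component of G is polynomial
  have hGi : ∀ i : Fin 2, ∃ r : MvPolynomial (Fin 2) ℂ, ∀ y, G y i = eval y r := by
    intro i
    obtain ⟨A, hA0, hAval⟩ := JPaux.exists_annihilator ![X i, q 0, q 1]
    set B := MvPolynomial.finSuccEquiv ℂ 2 A with hB
    have hB0 : B ≠ 0 := by
      intro hcon
      exact hA0 ((map_eq_zero_iff _ (AlgEquiv.injective _)).mp hcon)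
    have hrel : ∀ x : Fin 2 → ℂ, Polynomial.eval (x i)
        (Polynomial.map (MvPolynomial.eval (F x)) B) = 0 := by
      intro x
      have h1 : eval x (MvPolynomial.aeval ![X i, q 0, q 1] A) = 0 := by rw [hAval]; simp
      rw [JPaux.eval_aeval] at h1
      have h2 : (fun j => eval x ((![X i, q 0, q 1] : Fin 3 → MvPolynomial (Fin 2) ℂ) j))
          = Fin.cons (x i) (F x) := by
        funext j
        fin_cases j
        · simp
        · rfl
        · rfl
      rw [h2, MvPolynomial.eval_eq_eval_mv_eval'] at h1
      exact h1
    set d := B.natDegree with hd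
    have hrel' : ∀ y : Fin 2 → ℂ, ∑ k ∈ Finset.range (d + 1),
        eval y (B.coeff k) * (G y i) ^ k = 0 := by
      intro y
      obtain ⟨x, rfl⟩ := hsurjF y
      have h1 := hrel x
      rw [Polynomial.eval_eq_sum_range'
        (lt_of_le_of_lt (Polynomial.natDegree_map_le) (Nat.lt_succ_self d))] at h1
      simp only [Polynomial.coeff_map] at h1
      rw [hGF x]
      exact h1
    by_cases hd0 : d = 0
    · exfalso
      have hco : B.coeff 0 ≠ 0 := by
        intro hcon
        apply hB0
        have hBC := Polynomial.eq_C_of_natDegree_eq_zero (show B.natDegree = 0 by rw [← hd, hd0])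
        rw [hBC, hcon, map_zero]
      refine hco (MvPolynomial.funext fun y => ?_)
      have h1 := hrel' y
      rw [hd0] at h1
      simpa using h1
    have hd1 : 1 ≤ d := Nat.one_le_iff_ne_zero.mpr hd0
    have hlead : B.coeff d ≠ 0 := by
      rw [hd]
      exact Polynomial.leadingCoeff_ne_zero.mpr hB0
    set h : (Fin 2 → ℂ) → ℂ := fun y => eval y (B.coeff d) * G y i with hh
    have hdiffh : Differentiable ℂ h := by
      intro y
      exact ((JPaux.differentiable_eval (B.coeff d)) y).mul
        (((ContinuousLinearMap.proj i : (Fin 2 → ℂ) →L[ℂ] ℂ).differentiable.differentiableAt).comp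
          y (hGdiff y))
    have hmonic : ∀ y, (h y) ^ d = ∑ k ∈ Finset.range d,
        (-(eval y (B.coeff k * (B.coeff d) ^ (d - 1 - k)))) * (h y) ^ k := by
      intro y
      set a : ℕ → ℂ := fun k => eval y (B.coeff k) with ha
      set g := G y i with hg
      have e1 : ∀ k ∈ Finset.range d,
          (-(eval y (B.coeff k * (B.coeff d) ^ (d - 1 - k)))) * (h y) ^ k
          = -((a d) ^ (d - 1) * (a k * g ^ k)) := by
        intro k hk
        have hk' : k ≤ d - 1 := by
          have := Finset.mem_range.mp hk; omega
        have hpow : (a d) ^ (d - 1 - k) * (a d) ^ k = (a d) ^ (d - 1) := by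
          rw [← pow_add]; congr 1; omega
        rw [hh, map_mul, map_pow, mul_pow]
        show -(a k * a d ^ (d - 1 - k)) * (a d ^ k * g ^ k) = -(a d ^ (d - 1) * (a k * g ^ k))
        linear_combination (-(a k) * g ^ k) * hpow
      rw [Finset.sum_congr rfl e1, Finset.sum_neg_distrib, ← Finset.mul_sum]
      have e2 : ∑ k ∈ Finset.range d, a k * g ^ k = -(a d * g ^ d) := by
        have h1 := hrel' y
        rw [Finset.sum_range_succ] at h1
        linear_combination h1
      rw [e2]
      have e3 : (a d) ^ d = (a d) ^ (d - 1) * a d := by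
        rw [← pow_succ]
        congr 1
        omega
      rw [hh, mul_pow]
      show (a d) ^ d * g ^ d = -(a d ^ (d-1) * -(a d * g ^ d))
      linear_combination g ^ d * e3
    have hgrowth : ∃ (C : ℝ) (N : ℕ), (∀ y, ‖h y‖ ≤ C * (1 + ‖y‖) ^ N) := by
      have hbk : ∀ k : ℕ, ∃ (C : ℝ) (N : ℕ), 0 ≤ C ∧ ∀ y : Fin 2 → ℂ,
          ‖eval y (B.coeff k * (B.coeff d) ^ (d - 1 - k))‖ ≤ C * (1 + ‖y‖) ^ N :=
        fun k => JPaux.growth_eval _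
      choose Ck Nk hCk hNk using hbk
      refine ⟨1 + ∑ k ∈ Finset.range d, Ck k, (Finset.range d).sup Nk, fun y => ?_⟩
      have hbase : (1:ℝ) ≤ 1 + ‖y‖ := by linarith [norm_nonneg y]
      have hroot := JPaux.root_bound hd1 (h y)
        (fun k => -(eval y (B.coeff k * (B.coeff d) ^ (d - 1 - k)))) (hmonic y)
      have hsum : ∑ k ∈ Finset.range d, ‖-(eval y (B.coeff k * (B.coeff d) ^ (d - 1 - k)))‖
          ≤ (∑ k ∈ Finset.range d, Ck k) * (1 + ‖y‖) ^ ((Finset.range d).sup Nk) := by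
        rw [Finset.sum_mul]
        refine Finset.sum_le_sum fun k hk => ?_
        rw [norm_neg]
        refine (hNk k y).trans ?_
        exact mul_le_mul_of_nonneg_left
          (pow_le_pow_right₀ hbase (Finset.le_sup hk)) (hCk k)
      have hone : (1:ℝ) ≤ (1 + ‖y‖) ^ ((Finset.range d).sup Nk) := one_le_pow₀ hbase
      calc ‖h y‖ ≤ 1 + ∑ k ∈ Finset.range d,
            ‖-(eval y (B.coeff k * (B.coeff d) ^ (d - 1 - k)))‖ := hroot
        _ ≤ (1 + ‖y‖) ^ ((Finset.range d).sup Nk)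
            + (∑ k ∈ Finset.range d, Ck k) * (1 + ‖y‖) ^ ((Finset.range d).sup Nk) := by
            gcongr
        _ = (1 + ∑ k ∈ Finset.range d, Ck k) * (1 + ‖y‖) ^ ((Finset.range d).sup Nk) := by
            ring
    obtain ⟨C, N, hCb⟩ := hgrowth
    obtain ⟨H, hHval⟩ := JPaux.poly_of_growth_two h hdiffh C N hCb
    have hGH : ∀ y, G y i * eval y (B.coeff d) = eval y H := by
      intro y
      rw [← hHval y, hh]
      ring
    -- reduced fraction
    obtain ⟨P, Qd, hrelp, hmk⟩ := IsFractionRing.exists_reduced_fraction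
      (A := MvPolynomial (Fin 2) ℂ) (K := FractionRing (MvPolynomial (Fin 2) ℂ))
      (IsLocalization.mk' (FractionRing (MvPolynomial (Fin 2) ℂ)) H
        ⟨B.coeff d, mem_nonZeroDivisors_of_ne_zero hlead⟩)
    have hcross : P * B.coeff d = H * (Qd : MvPolynomial (Fin 2) ℂ) := by
      rw [IsLocalization.mk'_eq_iff_eq'] at hmk
      exact IsFractionRing.injective (MvPolynomial (Fin 2) ℂ)
        (FractionRing (MvPolynomial (Fin 2) ℂ)) hmk
    have hptwise : ∀ y, (G y i * eval y (Qd : MvPolynomial (Fin 2) ℂ) - eval y P)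
        * eval y (B.coeff d) = 0 := by
      intro y
      have h1 := hGH y
      have h2 : eval y P * eval y (B.coeff d)
          = eval y H * eval y (Qd : MvPolynomial (Fin 2) ℂ) := by
        rw [← map_mul, ← map_mul, hcross]
      linear_combination (eval y (Qd : MvPolynomial (Fin 2) ℂ)) * h1 - h2
    have hQP : ∀ y, G y i * eval y (Qd : MvPolynomial (Fin 2) ℂ) = eval y P := by
      have hdense := JPaux.dense_nonzero hlead
      have hcont1 : Continuous (fun y => G y i * eval y (Qd : MvPolynomial (Fin 2) ℂ)) :=
        ((continuous_apply i).comp hGcont).mul (JPaux.continuous_eval _)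
      have hcont2 : Continuous (fun y : Fin 2 → ℂ => eval y P) := JPaux.continuous_eval P
      have heq := Continuous.ext_on hdense hcont1 hcont2 (fun y hy => by
        rcases mul_eq_zero.mp (hptwise y) with h1 | h1
        · exact sub_eq_zero.mp h1
        · exact absurd h1 hy)
      exact fun y => congrFun heq y
    have hzero : ∀ y, eval y (Qd : MvPolynomial (Fin 2) ℂ) = 0 → eval y P = 0 := by
      intro y hy
      have h1 := hQP y
      rw [hy, mul_zero] at h1
      exact h1.symm
    have hQunit : IsUnit (Qd : MvPolynomial (Fin 2) ℂ) := by
      by_contra hnu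
      have hQ0 : (Qd : MvPolynomial (Fin 2) ℂ) ≠ 0 := nonZeroDivisors.ne_zero Qd.2
      obtain ⟨ir, hirr, hdvd⟩ := WfDvdMonoid.exists_irreducible_factor hnu hQ0
      have hmem : P ∈ (Ideal.span {(Qd : MvPolynomial (Fin 2) ℂ)}).radical := by
        rw [← MvPolynomial.vanishingIdeal_zeroLocus_eq_radical (K := ℂ),
          MvPolynomial.mem_vanishingIdeal_iff]
        intro x hx
        apply hzero
        exact (MvPolynomial.mem_zeroLocus_iff).mp hx _ (Ideal.subset_span rfl)
      obtain ⟨n, hn⟩ := Ideal.mem_radical_iff.mp hmem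
      rw [Ideal.mem_span_singleton] at hn
      have hirP : ir ∣ P :=
        (UniqueFactorizationMonoid.irreducible_iff_prime.mp hirr).dvd_of_dvd_pow
          (dvd_trans hdvd hn)
      exact hirr.not_isUnit (hrelp hirP hdvd)
    obtain ⟨u, hu⟩ := hQunit
    refine ⟨P * ↑u⁻¹, fun y => ?_⟩
    have h1 : eval y ((Qd : MvPolynomial (Fin 2) ℂ) * ↑u⁻¹) = 1 := by
      rw [← hu, ← Units.val_mul, mul_inv_cancel, Units.val_one, map_one]
    calc G y i = G y i * eval y ((Qd : MvPolynomial (Fin 2) ℂ) * ↑u⁻¹) := by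
          rw [h1, mul_one]
      _ = (G y i * eval y (Qd : MvPolynomial (Fin 2) ℂ)) * eval y (↑u⁻¹ :
            MvPolynomial (Fin 2) ℂ) := by rw [map_mul]; ring
      _ = eval y P * eval y (↑u⁻¹ : MvPolynomial (Fin 2) ℂ) := by rw [hQP y]
      _ = eval y (P * ↑u⁻¹) := by rw [map_mul]
  choose r hr using hGi
  exact ⟨hinjF, G, ⟨r, fun y i => hr i y⟩, fun x => hGF x, fun y => hFG y⟩
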